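/- Let I₁ → I₂ → ⋯ → I_{ℓ+1} be a path of increasing flips in a subword complex, where the k-th flip removes position p_k and adds position n_k with p_k < n_k. Then for all k ∈ [ℓ], min{p_k, …, p_ℓ} = min(I_k ∖ I_{ℓ+1}) and max{n_1, …, n_k} = max(I_{k+1} ∖ I_1). Consequently, the path has strictly increasing labels p_1 < ⋯ < p_ℓ if and only if p_k = min(I_k ∖ I_{ℓ+1}) for all k. -/

import Mathlib

open scoped Classical

/-- Directed walks in a graph `E`, recorded by the list of vertices after the start. -/
inductive DWalk {α : Type*} (E : α → α → Prop) : α → α → List α → Prop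
  | nil (u : α) : DWalk E u u []
  | cons {u w v : α} {l : List α} : E u w → DWalk E w v l → DWalk E u v (w :: l)

/-- The sequence of edge labels along a walk from `u` with vertex list `l`. -/
def wLabels {α : Type*} (lab : α → α → ℕ) (u : α) (l : List α) : List ℕ :=
  List.zipWith lab (u :: l) l

/-- A facet of the subword complex `SC(Q, ρ)`: a set of positions whose complement is
a reduced expression for `ρ` as a subword of `Q`. -/
def IsSCFacet {B W : Type*} [Group W] {M : CoxeterMatrix B} (cs : CoxeterSystem M W)
    {m : ℕ} (Q : Fin m → B) (ρ : W) (I : Finset (Fin m)) : Prop :=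
  cs.wordProd ((Iᶜ.sort (· ≤ ·)).map Q) = ρ ∧ Iᶜ.card = cs.length ρ

/-- The edges of the increasing flip graph: `I → J` whenever `I∖{i} = J∖{j}` with
`i < j`. -/
def FlipEdge {B W : Type*} [Group W] {M : CoxeterMatrix B} (cs : CoxeterSystem M W)
    {m : ℕ} (Q : Fin m → B) (ρ : W) (I J : Finset (Fin m)) : Prop :=
  IsSCFacet cs Q ρ I ∧ IsSCFacet cs Q ρ J ∧
    ∃ i ∈ I, ∃ j ∈ J, i < j ∧ I.erase i = J.erase j

/-- The positive edge label of a flip `I → J`: the position flipped out,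
i.e. the unique element of `I ∖ J`. -/
def pLab {m : ℕ} (I J : Finset (Fin m)) : ℕ := (I \ J).sup Fin.val

/-- The negative edge label of a flip `I → J`: the position flipped in,
i.e. the unique element of `J ∖ I`. -/
def nLab {m : ℕ} (I J : Finset (Fin m)) : ℕ := (J \ I).sup Fin.val


namespace IFPaux

/-- abstract flip edge -/
def FE {m : ℕ} (I J : Finset (Fin m)) : Prop :=
  ∃ i j : Fin m, i < j ∧ I \ J = {i} ∧ J \ I = {j}

lemma flipEdge_fe {B W : Type*} [Group W] {M : CoxeterMatrix B} {cs : CoxeterSystem M W}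
    {m : ℕ} {Q : Fin m → B} {ρ : W} {I J : Finset (Fin m)}
    (h : FlipEdge cs Q ρ I J) : FE I J := by
  obtain ⟨-, -, i, hi, j, hj, hij, he⟩ := h
  have hne : i ≠ j := ne_of_lt hij
  have hiJ : i ∉ J := by
    intro hiJ
    have : i ∈ J.erase j := Finset.mem_erase.mpr ⟨hne, hiJ⟩
    rw [← he] at this
    exact (Finset.mem_erase.mp this).1 rfl
  have hjI : j ∉ I := by
    intro hjI
    have : j ∈ I.erase i := Finset.mem_erase.mpr ⟨hne.symm, hjI⟩
    rw [he] at this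
    exact (Finset.mem_erase.mp this).1 rfl
  refine ⟨i, j, hij, ?_, ?_⟩
  · apply Finset.ext; intro x
    simp only [Finset.mem_sdiff, Finset.mem_singleton]
    constructor
    · rintro ⟨hxI, hxJ⟩
      by_contra hxi
      have : x ∈ I.erase i := Finset.mem_erase.mpr ⟨hxi, hxI⟩
      rw [he] at this
      exact hxJ (Finset.mem_of_mem_erase this)
    · rintro rfl; exact ⟨hi, hiJ⟩
  · apply Finset.ext; intro x
    simp only [Finset.mem_sdiff, Finset.mem_singleton]
    constructor
    · rintro ⟨hxJ, hxI⟩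
      by_contra hxj
      have : x ∈ J.erase j := Finset.mem_erase.mpr ⟨hxj, hxJ⟩
      rw [← he] at this
      exact hxI (Finset.mem_of_mem_erase this)
    · rintro rfl; exact ⟨hj, hjI⟩

lemma exists_change {P : ℕ → Prop} {a b : ℕ} (hab : a ≤ b) (ha : P a) (hb : ¬ P b) :
    ∃ t, a ≤ t ∧ t < b ∧ P t ∧ ¬ P (t + 1) := by
  by_contra hc
  push_neg at hc
  apply hb
  have key : ∀ n, a ≤ n → n ≤ b → P n := by
    intro n han
    induction n, han using Nat.le_induction with
    | base => intro _; exact ha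
    | succ n hn ih => intro hnb; exact hc n hn (by omega) (ih (by omega))
  exact key b hab le_rfl

lemma fe_plab {m : ℕ} {I J : Finset (Fin m)} {i : Fin m}
    (h1 : I \ J = {i}) : pLab I J = i.val := by
  rw [pLab, h1, Finset.sup_singleton]

lemma fe_nlab {m : ℕ} {I J : Finset (Fin m)} {j : Fin m}
    (h2 : J \ I = {j}) : nLab I J = j.val := by
  rw [nLab, h2, Finset.sup_singleton]

lemma main_min {m : ℕ} (f : ℕ → Finset (Fin m)) (ℓ : ℕ)
    (hE : ∀ t, t < ℓ → FE (f t) (f (t + 1))) :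
    ((List.range ℓ).map (fun t => pLab (f t) (f (t + 1)))).minimum
      = ((f 0 \ f ℓ).image Fin.val).min := by
  set P : List ℕ := (List.range ℓ).map (fun t => pLab (f t) (f (t + 1))) with hPdef
  rcases Nat.eq_zero_or_pos ℓ with h0 | hpos
  · subst h0; simp [hPdef]
  have hPne : P ≠ [] := by
    simp only [hPdef, ne_eq, List.map_eq_nil_iff, List.range_eq_nil]; omega
  obtain ⟨p, hp⟩ : ∃ p : ℕ, P.minimum = (p : WithTop ℕ) := by
    cases hm : P.minimum with
    | top => exact absurd (List.minimum_eq_top.mp hm) hPne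
    | coe p => exact ⟨p, rfl⟩
  obtain ⟨hpmem, hple⟩ := List.minimum_eq_coe_iff.mp hp
  obtain ⟨t, ht, hgt⟩ : ∃ t, t < ℓ ∧ pLab (f t) (f (t + 1)) = p := by
    simpa [hPdef] using hpmem
  have hple' : ∀ s, s < ℓ → p ≤ pLab (f s) (f (s + 1)) := by
    intro s hs
    exact hple _ (by simp [hPdef]; exact ⟨s, hs, rfl⟩)
  obtain ⟨i, j, hij, hIJ, hJI⟩ := hE t ht
  have hiv : i.val = p := by rw [← hgt]; exact (fe_plab hIJ).symm
  have hit : i ∈ f t ∧ i ∉ f (t + 1) := by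
    have : i ∈ f t \ f (t + 1) := by rw [hIJ]; exact Finset.mem_singleton_self i
    exact Finset.mem_sdiff.mp this
  -- i ∈ f 0
  have hi0 : i ∈ f 0 := by
    by_contra h0'
    obtain ⟨s, -, hst, hs1, hs2⟩ :=
      exists_change (P := fun n => i ∉ f n) (Nat.zero_le t) h0' (not_not_intro hit.1)
    obtain ⟨is, js, hijs, hIJs, hJIs⟩ := hE s (lt_trans hst ht)
    have hijseq : i = js := by
      have : i ∈ f (s + 1) \ f s := Finset.mem_sdiff.mpr ⟨not_not.mp hs2, hs1⟩
      rw [hJIs] at this; exact Finset.mem_singleton.mp this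
    have h1 : pLab (f s) (f (s + 1)) = is.val := fe_plab hIJs
    have h2 : is.val < i.val := by rw [hijseq]; exact hijs
    have := hple' s (lt_trans hst ht)
    omega
  -- i ∉ f ℓ
  have hil : i ∉ f ℓ := by
    by_contra hl'
    obtain ⟨s, hts, hsl, hs1, hs2⟩ :=
      exists_change (P := fun n => i ∉ f n) (Nat.succ_le_of_lt ht) hit.2 (not_not_intro hl')
    obtain ⟨is, js, hijs, hIJs, hJIs⟩ := hE s hsl
    have hijseq : i = js := by
      have : i ∈ f (s + 1) \ f s := Finset.mem_sdiff.mpr ⟨not_not.mp hs2, hs1⟩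
      rw [hJIs] at this; exact Finset.mem_singleton.mp this
    have h1 : pLab (f s) (f (s + 1)) = is.val := fe_plab hIJs
    have h2 : is.val < i.val := by rw [hijseq]; exact hijs
    have := hple' s hsl
    omega
  rw [hp]
  apply le_antisymm
  · apply Finset.le_min
    intro a ha
    obtain ⟨x, hx, rfl⟩ := Finset.mem_image.mp ha
    obtain ⟨hx0, hxl⟩ := Finset.mem_sdiff.mp hx
    obtain ⟨s, -, hsl, hs1, hs2⟩ :=
      exists_change (P := fun n => x ∈ f n) (Nat.zero_le ℓ) hx0 hxl
    obtain ⟨is, js, hijs, hIJs, hJIs⟩ := hE s hsl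
    have hxeq : x = is := by
      have : x ∈ f s \ f (s + 1) := Finset.mem_sdiff.mpr ⟨hs1, hs2⟩
      rw [hIJs] at this; exact Finset.mem_singleton.mp this
    have h1 : pLab (f s) (f (s + 1)) = is.val := fe_plab hIJs
    have hxv : x.val = is.val := by rw [hxeq]
    have := hple' s hsl
    exact WithTop.coe_le_coe.mpr (show p ≤ x.val by omega)
  · exact Finset.min_le (Finset.mem_image.mpr ⟨i, Finset.mem_sdiff.mpr ⟨hi0, hil⟩, hiv⟩)

lemma main_max {m : ℕ} (f : ℕ → Finset (Fin m)) (ℓ : ℕ)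
    (hE : ∀ t, t < ℓ → FE (f t) (f (t + 1))) :
    ((List.range ℓ).map (fun t => nLab (f t) (f (t + 1)))).maximum
      = ((f ℓ \ f 0).image Fin.val).max := by
  set P : List ℕ := (List.range ℓ).map (fun t => nLab (f t) (f (t + 1))) with hPdef
  rcases Nat.eq_zero_or_pos ℓ with h0 | hpos
  · subst h0; simp [hPdef]
  have hPne : P ≠ [] := by
    simp only [hPdef, ne_eq, List.map_eq_nil_iff, List.range_eq_nil]; omega
  obtain ⟨p, hp⟩ : ∃ p : ℕ, P.maximum = (p : WithBot ℕ) := by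
    cases hm : P.maximum with
    | bot => exact absurd (List.maximum_eq_bot.mp hm) hPne
    | coe p => exact ⟨p, rfl⟩
  obtain ⟨hpmem, hple⟩ := List.maximum_eq_coe_iff.mp hp
  obtain ⟨t, ht, hgt⟩ : ∃ t, t < ℓ ∧ nLab (f t) (f (t + 1)) = p := by
    simpa [hPdef] using hpmem
  have hple' : ∀ s, s < ℓ → nLab (f s) (f (s + 1)) ≤ p := by
    intro s hs
    exact hple _ (by simp [hPdef]; exact ⟨s, hs, rfl⟩)
  obtain ⟨i, j, hij, hIJ, hJI⟩ := hE t ht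
  have hjv : j.val = p := by rw [← hgt]; exact (fe_nlab hJI).symm
  have hjt : j ∈ f (t + 1) ∧ j ∉ f t := by
    have : j ∈ f (t + 1) \ f t := by rw [hJI]; exact Finset.mem_singleton_self j
    exact Finset.mem_sdiff.mp this
  -- j ∈ f ℓ
  have hjl : j ∈ f ℓ := by
    by_contra hl'
    obtain ⟨s, hts, hsl, hs1, hs2⟩ :=
      exists_change (P := fun n => j ∈ f n) (Nat.succ_le_of_lt ht) hjt.1 hl'
    obtain ⟨is, js, hijs, hIJs, hJIs⟩ := hE s hsl
    have hjiseq : j = is := by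
      have : j ∈ f s \ f (s + 1) := Finset.mem_sdiff.mpr ⟨hs1, hs2⟩
      rw [hIJs] at this; exact Finset.mem_singleton.mp this
    have h1 : nLab (f s) (f (s + 1)) = js.val := fe_nlab hJIs
    have h2 : j.val < js.val := by rw [hjiseq]; exact hijs
    have := hple' s hsl
    omega
  -- j ∉ f 0
  have hj0 : j ∉ f 0 := by
    by_contra h0'
    obtain ⟨s, -, hst, hs1, hs2⟩ :=
      exists_change (P := fun n => j ∈ f n) (Nat.zero_le t) h0' hjt.2
    obtain ⟨is, js, hijs, hIJs, hJIs⟩ := hE s (lt_trans hst ht)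
    have hjiseq : j = is := by
      have : j ∈ f s \ f (s + 1) := Finset.mem_sdiff.mpr ⟨hs1, hs2⟩
      rw [hIJs] at this; exact Finset.mem_singleton.mp this
    have h1 : nLab (f s) (f (s + 1)) = js.val := fe_nlab hJIs
    have h2 : j.val < js.val := by rw [hjiseq]; exact hijs
    have := hple' s (lt_trans hst ht)
    omega
  rw [hp]
  apply le_antisymm
  · exact Finset.le_max (Finset.mem_image.mpr ⟨j, Finset.mem_sdiff.mpr ⟨hjl, hj0⟩, hjv⟩)
  · apply Finset.max_le
    intro a ha
    obtain ⟨x, hx, rfl⟩ := Finset.mem_image.mp ha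
    obtain ⟨hxl, hx0⟩ := Finset.mem_sdiff.mp hx
    obtain ⟨s, -, hsl, hs1, hs2⟩ :=
      exists_change (P := fun n => x ∉ f n) (Nat.zero_le ℓ) hx0 (not_not_intro hxl)
    obtain ⟨is, js, hijs, hIJs, hJIs⟩ := hE s hsl
    have hxeq : x = js := by
      have : x ∈ f (s + 1) \ f s := Finset.mem_sdiff.mpr ⟨not_not.mp hs2, hs1⟩
      rw [hJIs] at this; exact Finset.mem_singleton.mp this
    have h1 : nLab (f s) (f (s + 1)) = js.val := fe_nlab hJIs
    have hxv : x.val = js.val := by rw [hxeq]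
    have := hple' s hsl
    exact WithBot.coe_le_coe.mpr (show x.val ≤ p by omega)

lemma dwalk_getD {α : Type*} {E : α → α → Prop} {u v : α} {l : List α}
    (hw : DWalk E u v l) (d : α) :
    (∀ t, t < l.length → E ((u :: l).getD t d) ((u :: l).getD (t + 1) d)) ∧
      (u :: l).getD l.length d = v := by
  induction hw with
  | nil u => simp
  | @cons u w v l e _ ih =>
      constructor
      · intro t ht
        cases t with
        | zero => simpa using e
        | succ t =>
            have := ih.1 t (by simpa using Nat.lt_of_succ_lt_succ ht)
            simpa using this
      · simpa using ih.2

lemma drop_map_range {β : Type*} (g : ℕ → β) (ℓ k : ℕ) :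
    ((List.range ℓ).map g).drop k = (List.range (ℓ - k)).map (fun t => g (k + t)) := by
  apply List.ext_getElem
  · simp
  · intro n h1 h2
    simp [List.getElem_drop]

end IFPaux

namespace IFPaux

lemma main_min_drop {m : ℕ} (f : ℕ → Finset (Fin m)) (ℓ k : ℕ) (hk : k ≤ ℓ)
    (hE : ∀ t, t < ℓ → FE (f t) (f (t + 1))) :
    (((List.range ℓ).map (fun t => pLab (f t) (f (t + 1)))).drop k).minimum
      = ((f k \ f ℓ).image Fin.val).min := by
  rw [drop_map_range]
  have h : (List.map (fun t => pLab (f (k + t)) (f (k + t + 1))) (List.range (ℓ - k))).minimum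
      = (Finset.image Fin.val (f k \ f (k + (ℓ - k)))).min :=
    main_min (fun t => f (k + t)) (ℓ - k) (fun t ht => hE (k + t) (by omega))
  rw [show k + (ℓ - k) = ℓ from by omega] at h
  exact h

lemma main_max_take {m : ℕ} (f : ℕ → Finset (Fin m)) (ℓ k : ℕ) (hk : k ≤ ℓ)
    (hE : ∀ t, t < ℓ → FE (f t) (f (t + 1))) :
    (((List.range ℓ).map (fun t => nLab (f t) (f (t + 1)))).take k).maximum
      = ((f k \ f 0).image Fin.val).max := by
  rw [← List.map_take, List.take_range, show k ⊓ ℓ = k from by omega]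
  exact main_max f k (fun t ht => hE t (by omega))

end IFPaux



/-- Along a path `I₁ → ⋯ → I_{ℓ+1}` of increasing flips with positive labels `pₖ` and
negative labels `nₖ`: `min{pₖ,…,p_ℓ} = min(Iₖ ∖ I_{ℓ+1})` and
`max{n₁,…,nₖ} = max(I_{k+1} ∖ I₁)`; consequently the path is rising if and only if
`pₖ = min(Iₖ ∖ I_{ℓ+1})` for all `k`. -/
theorem increasing_flip_path_min_max {B W : Type*} [Group W] [Finite W]
    {M : CoxeterMatrix B} (cs : CoxeterSystem M W)
    {m : ℕ} (Q : Fin m → B) (ρ : W) (I J : Finset (Fin m)) (l : List (Finset (Fin m)))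
    (hI : IsSCFacet cs Q ρ I) (hw : DWalk (FlipEdge cs Q ρ) I J l) :
    (∀ k : ℕ, k < l.length →
      ((wLabels pLab I l).drop k).minimum =
        ((((I :: l).getD k ∅) \ J).image Fin.val).min ∧
      ((wLabels nLab I l).take (k + 1)).maximum =
        ((((I :: l).getD (k + 1) ∅) \ I).image Fin.val).max) ∧
    (List.Chain' (· < ·) (wLabels pLab I l) ↔
      ∀ k : ℕ, k < l.length →
        ((((I :: l).getD k ∅) \ J).image Fin.val).min =
          ((wLabels pLab I l).getD k 0 : WithBot ℕ)) := by
  classical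
  obtain ⟨hE0, hlast⟩ := IFPaux.dwalk_getD hw ∅
  have hE : ∀ t, t < l.length →
      IFPaux.FE ((I :: l).getD t ∅) ((I :: l).getD (t + 1) ∅) :=
    fun t ht => IFPaux.flipEdge_fe (hE0 t ht)
  have hPlen : (wLabels pLab I l).length = l.length := by
    simp [wLabels]
  have hP : wLabels pLab I l
      = (List.range l.length).map
          (fun t => pLab ((I :: l).getD t ∅) ((I :: l).getD (t + 1) ∅)) := by
    apply List.ext_getElem
    · simpa using hPlen
    · intro n h1 h2
      have hb1 : n < (I :: l).length := by simp at h2 ⊢; omega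
      have hb2 : n + 1 < (I :: l).length := by simp at h2 ⊢; omega
      have hb3 : n < l.length := by simpa using h2
      simp only [wLabels, List.getElem_zipWith, List.getElem_map, List.getElem_range]
      rw [List.getD_eq_getElem _ _ hb1, List.getD_eq_getElem _ _ hb2,
        List.getElem_cons_succ]
  have hN : wLabels nLab I l
      = (List.range l.length).map
          (fun t => nLab ((I :: l).getD t ∅) ((I :: l).getD (t + 1) ∅)) := by
    apply List.ext_getElem
    · simp [wLabels]
    · intro n h1 h2
      have hb1 : n < (I :: l).length := by simp at h2 ⊢; omega
      have hb2 : n + 1 < (I :: l).length := by simp at h2 ⊢; omega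
      simp only [wLabels, List.getElem_zipWith, List.getElem_map, List.getElem_range]
      rw [List.getD_eq_getElem _ _ hb1, List.getD_eq_getElem _ _ hb2,
        List.getElem_cons_succ]
  have part1min : ∀ k, k < l.length →
      ((wLabels pLab I l).drop k).minimum =
        ((((I :: l).getD k ∅) \ J).image Fin.val).min := by
    intro k hk
    rw [hP, ← hlast]
    exact IFPaux.main_min_drop (fun t => (I :: l).getD t ∅) l.length k hk.le hE
  have hPget : ∀ t, t < l.length → ∀ (ht : t < (wLabels pLab I l).length),
      (wLabels pLab I l)[t] = pLab ((I :: l).getD t ∅) ((I :: l).getD (t + 1) ∅) := by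
    intro t ht ht'
    simp [hP]
  refine ⟨fun k hk => ⟨part1min k hk, ?_⟩, ?_, ?_⟩
  · -- max part
    rw [hN]
    exact IFPaux.main_max_take (fun t => (I :: l).getD t ∅) l.length (k + 1) (by omega) hE
  · -- forward direction of iff
    intro hch k hk
    rw [← part1min k hk]
    have hkP : k < (wLabels pLab I l).length := by rw [hPlen]; exact hk
    rw [List.getD_eq_getElem _ _ hkP, List.drop_eq_getElem_cons hkP, List.minimum_cons]
    apply inf_eq_left.mpr
    rcases hmm : ((wLabels pLab I l).drop (k + 1)).minimum with _ | q
    · exact le_top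
    · have hqmem := List.minimum_mem hmm
      obtain ⟨n, hn, hq⟩ := List.mem_iff_getElem.mp hqmem
      have hq' : (wLabels pLab I l)[k + 1 + n]'(by
          have := (List.length_drop (i := k + 1) (l := wLabels pLab I l)) ▸ hn; omega) = q := by
        rw [← hq, List.getElem_drop]
      have hpair : List.Pairwise (· < ·) (wLabels pLab I l) :=
        List.isChain_iff_pairwise.mp hch
      have hlt : (wLabels pLab I l)[k] < q := by
        rw [← hq']
        exact List.pairwise_iff_getElem.mp hpair k (k + 1 + n) hkP _ (by omega)
      exact WithTop.coe_le_coe.mpr hlt.le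
  · -- backward direction of iff
    intro h
    apply List.isChain_iff_getElem.mpr
    intro i hi
    rw [hPlen] at hi
    have hii : i < l.length := by omega
    have hi1 : i + 1 < l.length := by omega
    have hiP : i < (wLabels pLab I l).length := by omega
    have hi1P : i + 1 < (wLabels pLab I l).length := by omega
    have hmineq : ((wLabels pLab I l).drop i).minimum
        = ((wLabels pLab I l)[i] : WithTop ℕ) := by
      rw [part1min i hii, h i hii, List.getD_eq_getElem _ _ hiP]; rfl
    have hmem : (wLabels pLab I l)[i + 1] ∈ (wLabels pLab I l).drop i := by
      have hlen : 1 < ((wLabels pLab I l).drop i).length := by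
        rw [List.length_drop]; omega
      have : ((wLabels pLab I l).drop i)[1] = (wLabels pLab I l)[i + 1] := by
        rw [List.getElem_drop]
      exact this ▸ List.getElem_mem hlen
    have hle : (wLabels pLab I l)[i] ≤ (wLabels pLab I l)[i + 1] :=
      List.minimum_le_of_mem hmem hmineq
    have hne : (wLabels pLab I l)[i] ≠ (wLabels pLab I l)[i + 1] := by
      obtain ⟨a, b, hab, hIJa, hJIa⟩ := hE i hii
      obtain ⟨c, d, hcd, hIJc, hJIc⟩ := hE (i + 1) hi1
      have ha : (wLabels pLab I l)[i] = a.val := by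
        rw [hPget i hii hiP]; exact IFPaux.fe_plab hIJa
      have hc : (wLabels pLab I l)[i + 1] = c.val := by
        rw [hPget (i + 1) hi1 hi1P]; exact IFPaux.fe_plab hIJc
      have hanotin : a ∉ (I :: l).getD (i + 1) ∅ := by
        have : a ∈ (I :: l).getD i ∅ \ (I :: l).getD (i + 1) ∅ := by
          rw [hIJa]; exact Finset.mem_singleton_self a
        exact (Finset.mem_sdiff.mp this).2
      have hcin : c ∈ (I :: l).getD (i + 1) ∅ := by
        have : c ∈ (I :: l).getD (i + 1) ∅ \ (I :: l).getD (i + 2) ∅ := by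
          rw [hIJc]; exact Finset.mem_singleton_self c
        exact (Finset.mem_sdiff.mp this).1
      rw [ha, hc]
      intro hval
      exact hanotin (Fin.val_injective hval ▸ hcin)
    exact lt_of_le_of_ne hle hne
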